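/- Suppose v2 = v3 = v4 = v > 0, v1 > 0, and v1 < 3v. Then the point p* with p1 = (3v − v1)/(9v − v1) and p2 = p3 = p4 = 2v/(9v − v1) lies in the probability simplex and maximizes L((v1,v,v,v),·) over the probability simplex, and the maximum value equals 4·v³/(9v − v1)². -/

import Mathlib

set_option maxHeartbeats 1000000 in
/-- Suppose `v2 = v3 = v4 = v > 0`, `v1 > 0`, and `v1 < 3v`.  Then the point
`p*` with `p1 = (3v - v1)/(9v - v1)` and `p2 = p3 = p4 = 2v/(9v - v1)` lies in
the probability simplex and maximizes `L((v1,v,v,v),·)` there, with maximum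
value `4·v³/(9v - v1)²`. -/
theorem stmt7 (v1 v p1 p2 p3 p4 : ℝ)
    (hv1 : 0 < v1) (hv : 0 < v) (hlt : v1 < 3 * v)
    (hp1 : p1 = (3 * v - v1) / (9 * v - v1))
    (hp2 : p2 = 2 * v / (9 * v - v1))
    (hp3 : p3 = 2 * v / (9 * v - v1))
    (hp4 : p4 = 2 * v / (9 * v - v1)) :
    (0 ≤ p1 ∧ 0 ≤ p2 ∧ 0 ≤ p3 ∧ 0 ≤ p4 ∧ p1 + p2 + p3 + p4 = 1) ∧
    (∀ q1 q2 q3 q4 : ℝ, 0 ≤ q1 → 0 ≤ q2 → 0 ≤ q3 → 0 ≤ q4 →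
      q1 + q2 + q3 + q4 = 1 →
      v * q1 * q2 * q3 + v * q1 * q2 * q4 + v * q1 * q3 * q4 + v1 * q2 * q3 * q4
        ≤ v * p1 * p2 * p3 + v * p1 * p2 * p4 + v * p1 * p3 * p4
          + v1 * p2 * p3 * p4) ∧
    v * p1 * p2 * p3 + v * p1 * p2 * p4 + v * p1 * p3 * p4 + v1 * p2 * p3 * p4
      = 4 * v ^ 3 / (9 * v - v1) ^ 2 := by
  have hd : 0 < 9 * v - v1 := by linarith
  have hval : v * p1 * p2 * p3 + v * p1 * p2 * p4 + v * p1 * p3 * p4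
      + v1 * p2 * p3 * p4 = 4 * v ^ 3 / (9 * v - v1) ^ 2 := by
    subst hp1 hp2 hp3 hp4
    have hd' : v * 9 - v1 ≠ 0 := by linarith
    field_simp
    ring
  refine ⟨⟨?_, ?_, ?_, ?_, ?_⟩, ?_, hval⟩
  · rw [hp1]; exact div_nonneg (by linarith) hd.le
  · rw [hp2]; positivity
  · rw [hp3]; positivity
  · rw [hp4]; positivity
  · subst hp1 hp2 hp3 hp4; have hd' : v * 9 - v1 ≠ 0 := (by linarith); field_simp; ring
  · intro q1 q2 q3 q4 hq1 hq2 hq3 hq4 hsum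
    rw [hval]
    set s : ℝ := q2 + q3 + q4 with hs
    have hs0 : 0 ≤ s := by positivity
    have hq1s : q1 = 1 - s := by linarith
    have hs1 : 0 ≤ 1 - s := by linarith
    have h1 : q2 * q3 + q2 * q4 + q3 * q4 ≤ s ^ 2 / 3 := by
      nlinarith [sq_nonneg (q2 - q3), sq_nonneg (q2 - q4), sq_nonneg (q3 - q4)]
    have h2 : q2 * q3 * q4 ≤ s ^ 3 / 27 := by
      nlinarith [mul_nonneg hq2 (sq_nonneg (q3 - q4)),
        mul_nonneg hq3 (sq_nonneg (q2 - q4)),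
        mul_nonneg hq4 (sq_nonneg (q2 - q3)),
        mul_nonneg (mul_nonneg hq2 hq3) hq4, sq_nonneg (q2 + q3 + q4)]
    have key : v * (1 - s) * (s ^ 2 / 3) + v1 * (s ^ 3 / 27)
        ≤ 4 * v ^ 3 / (9 * v - v1) ^ 2 := by
      rw [le_div_iff₀ (by positivity : (0:ℝ) < (9 * v - v1) ^ 2)]
      have hexp : 4 * v ^ 3
          - (v * (1 - s) * (s ^ 2 / 3) + v1 * (s ^ 3 / 27)) * (9 * v - v1) ^ 2
          = (s * (9 * v - v1) - 6 * v) ^ 2 * (s * (9 * v - v1) + 3 * v) / 27 := by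
        ring
      have hnn : (0:ℝ) ≤ (s * (9 * v - v1) - 6 * v) ^ 2
          * (s * (9 * v - v1) + 3 * v) / 27 := by positivity
      linarith
    have hA : v * q1 * q2 * q3 + v * q1 * q2 * q4 + v * q1 * q3 * q4
        + v1 * q2 * q3 * q4 ≤ v * (1 - s) * (s ^ 2 / 3) + v1 * (s ^ 3 / 27) := by
      rw [hq1s]
      have t1 : (0:ℝ) ≤ v * (1 - s) * (s ^ 2 / 3 - (q2 * q3 + q2 * q4 + q3 * q4)) :=
        mul_nonneg (mul_nonneg hv.le hs1) (by linarith)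
      have t2 : (0:ℝ) ≤ v1 * (s ^ 3 / 27 - q2 * q3 * q4) :=
        mul_nonneg hv1.le (by linarith)
      nlinarith [t1, t2]
    linarith
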